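/- Let H be a connected graph and U* a nonempty proper vertex subset achieving ĥ_H = ĥ_H(U*). Then both induced subgraphs H[U*] and H[V(H)∖U*] are connected. -/
import Mathlib


open Finset
open scoped Classical

noncomputable section

variable {V : Type*} [Fintype V]

/-- Number of edges between `A` and `B` (each cross edge counted once when `A`,`B` disjoint). -/
def ecut (G : SimpleGraph V) (A B : Finset V) : ℝ :=
  ((A ×ˢ B).filter fun p => G.Adj p.1 p.2).card

/-- Number of edges inside `A`. -/
def ein (G : SimpleGraph V) (A : Finset V) : ℝ := ecut G A A / 2

/-- Volume of a vertex set: sum of degrees. -/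
def gvol (G : SimpleGraph V) (A : Finset V) : ℝ := ∑ v ∈ A, (G.degree v : ℝ)

/-- Number of edges of `G`. -/
def edgecount (G : SimpleGraph V) : ℝ := (G.edgeFinset.card : ℝ)

/-- Conductance (Cheeger constant) `h_G`. -/
def conduct (G : SimpleGraph V) : ℝ :=
  sInf { x | ∃ A : Finset V, A.Nonempty ∧ A ≠ univ ∧
    x = ecut G A Aᶜ / min (gvol G A) (gvol G Aᶜ) }

/-- Expansion-by-products `ĥ_G`. -/
def hhat (G : SimpleGraph V) : ℝ :=
  sInf { x | ∃ A : Finset V, A.Nonempty ∧ A ≠ univ ∧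
    x = ecut G A Aᶜ * gvol G univ / (gvol G A * gvol G Aᶜ) }

/-- Modularity score of a vertex partition. -/
def modScore (G : SimpleGraph V) (P : Finpartition (univ : Finset V)) : ℝ :=
  (∑ A ∈ P.parts, ein G A) / edgecount G
    - (∑ A ∈ P.parts, (gvol G A) ^ 2) / (4 * (edgecount G) ^ 2)

/-- Modularity `q*(G)`: maximum modularity score over vertex partitions. -/
def modularity (G : SimpleGraph V) : ℝ :=
  sSup { x | ∃ P : Finpartition (univ : Finset V), x = modScore G P }

lemma ecut_nonneg (G : SimpleGraph V) (A B : Finset V) : 0 ≤ ecut G A B :=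
  Nat.cast_nonneg _

lemma gvol_nonneg (G : SimpleGraph V) (A : Finset V) : 0 ≤ gvol G A :=
  Finset.sum_nonneg fun _ _ => Nat.cast_nonneg _

lemma ecut_comm (G : SimpleGraph V) (A B : Finset V) : ecut G A B = ecut G B A := by
  unfold ecut
  congr 1
  apply Finset.card_bij' (fun p _ => (p.2, p.1)) (fun p _ => (p.2, p.1)) <;>
    simp +contextual [Finset.mem_filter, Finset.mem_product, SimpleGraph.adj_comm]

lemma ecut_union_left (G : SimpleGraph V) {A B : Finset V} (C : Finset V) (h : Disjoint A B) :
    ecut G (A ∪ B) C = ecut G A C + ecut G B C := by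
  unfold ecut
  rw [Finset.union_product, Finset.filter_union, Finset.card_union_of_disjoint, Nat.cast_add]
  exact Finset.disjoint_filter_filter (Finset.disjoint_product.mpr (Or.inl h))

lemma ecut_union_right (G : SimpleGraph V) {B C : Finset V} (A : Finset V) (h : Disjoint B C) :
    ecut G A (B ∪ C) = ecut G A B + ecut G A C := by
  rw [ecut_comm, ecut_union_left G A h, ecut_comm G B A, ecut_comm G C A]

lemma gvol_union (G : SimpleGraph V) {A B : Finset V} (h : Disjoint A B) :
    gvol G (A ∪ B) = gvol G A + gvol G B := Finset.sum_union h

/-- In a connected graph with ≥2 vertices, every nonempty set has positive volume. -/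
lemma gvol_pos (H : SimpleGraph V) (hc : H.Connected) [Nontrivial V] {A : Finset V}
    (hA : A.Nonempty) : 0 < gvol H A := by
  obtain ⟨v, hv⟩ := hA
  have hdeg : 0 < H.degree v := by
    rw [SimpleGraph.degree_pos_iff_exists_adj]
    obtain ⟨w, hw⟩ := exists_ne v
    obtain ⟨p⟩ := hc.preconnected v w
    exact ⟨_, p.adj_snd (SimpleGraph.Walk.not_nil_of_ne hw.symm)⟩
  have : (0:ℝ) < (H.degree v : ℝ) := by exact_mod_cast hdeg
  exact lt_of_lt_of_le this (Finset.single_le_sum (f := fun v => (H.degree v : ℝ))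
    (fun _ _ => Nat.cast_nonneg _) hv)

/-- In a connected graph, a nonempty proper set has positive boundary cut. -/
lemma ecut_pos (H : SimpleGraph V) (hc : H.Connected) {A : Finset V}
    (hA : A.Nonempty) (hAp : A ≠ univ) : 0 < ecut H A Aᶜ := by
  obtain ⟨u, hu⟩ := hA
  obtain ⟨w, hw⟩ : ∃ w, w ∉ A := by
    by_contra h; push_neg at h; exact hAp (Finset.eq_univ_iff_forall.mpr h)
  obtain ⟨p⟩ := hc.preconnected u w
  obtain ⟨d, _, hd1, hd2⟩ := p.exists_boundary_dart (A : Set V) (by simpa) (by simpa)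
  have : ((A ×ˢ Aᶜ).filter fun p => H.Adj p.1 p.2).Nonempty :=
    ⟨(d.fst, d.snd), Finset.mem_filter.mpr ⟨Finset.mem_product.mpr
      ⟨by simpa using hd1, Finset.mem_compl.mpr (by simpa using hd2)⟩, d.adj⟩⟩
  have := Finset.card_pos.mpr this
  unfold ecut
  exact_mod_cast this

lemma hhat_le (G : SimpleGraph V) {A : Finset V} (hA : A.Nonempty) (hAp : A ≠ univ) :
    hhat G ≤ ecut G A Aᶜ * gvol G univ / (gvol G A * gvol G Aᶜ) := by
  apply csInf_le
  · refine ⟨0, fun x hx => ?_⟩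
    obtain ⟨B, _, _, rfl⟩ := hx
    exact div_nonneg (mul_nonneg (ecut_nonneg _ _ _) (gvol_nonneg _ _))
      (mul_nonneg (gvol_nonneg _ _) (gvol_nonneg _ _))
  · exact ⟨A, hA, hAp, rfl⟩

/-- If the induced graph on U is disconnected, U splits with no crossing edges. -/
lemma split_of_not_connected (H : SimpleGraph V) {U : Finset V} (hUne : U.Nonempty)
    (hnc : ¬ (H.induce (U : Set V)).Connected) :
    ∃ A : Finset V, A ⊆ U ∧ A.Nonempty ∧ A ≠ U ∧
      ∀ a ∈ A, ∀ b ∈ U \ A, ¬ H.Adj a b := by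
  have hne : Nonempty (U : Set V) := ⟨⟨hUne.choose, by simpa using hUne.choose_spec⟩⟩
  have hpc : ¬ (H.induce (U : Set V)).Preconnected := fun h =>
    hnc (SimpleGraph.connected_iff _ |>.mpr ⟨h, hne⟩)
  unfold SimpleGraph.Preconnected at hpc
  push_neg at hpc
  obtain ⟨x, y, hxy⟩ := hpc
  set G' := H.induce (U : Set V)
  refine ⟨U.filter (fun u => ∃ h : u ∈ U, G'.Reachable x ⟨u, h⟩), Finset.filter_subset _ _,
    ⟨x.1, Finset.mem_filter.mpr ⟨by simpa using x.2, by simpa using x.2, by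
      exact SimpleGraph.Reachable.refl _⟩⟩, ?_, ?_⟩
  · intro hA
    have : y.1 ∈ U.filter (fun u => ∃ h : u ∈ U, G'.Reachable x ⟨u, h⟩) := by
      rw [hA]; simpa using y.2
    obtain ⟨_, _, hr⟩ := Finset.mem_filter.mp this
    exact hxy (by convert hr)
  · intro a ha b hb hadj
    obtain ⟨haU, haU', hra⟩ := Finset.mem_filter.mp ha
    obtain ⟨hbU, hbA⟩ := Finset.mem_sdiff.mp hb
    apply hbA
    refine Finset.mem_filter.mpr ⟨hbU, hbU, hra.trans (SimpleGraph.Adj.reachable ?_)⟩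
    exact hadj


lemma induce_connected_of_min (H : SimpleGraph V) (hc : H.Connected)
    (U : Finset V) (hUne : U.Nonempty) (hUp : U ≠ univ)
    (hmin : ecut H U Uᶜ * gvol H univ / (gvol H U * gvol H Uᶜ) = hhat H) :
    (H.induce (U : Set V)).Connected := by
  by_contra hnc
  obtain ⟨A, hAU, hAne, hAneq, hcross⟩ := split_of_not_connected H hUne hnc
  set B := U \ A with hB
  have hBne : B.Nonempty := by
    rw [hB, Finset.sdiff_nonempty]
    exact fun h => hAneq (Finset.Subset.antisymm hAU h)
  have hdisjAB : Disjoint A B := Finset.disjoint_sdiff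
  have hUAB : U = A ∪ B := (Finset.union_sdiff_of_subset hAU).symm
  have hUcne : (Uᶜ : Finset V).Nonempty := by
    rw [Finset.nonempty_iff_ne_empty]
    intro h
    exact hUp (by simpa [Finset.compl_eq_empty_iff] using h)
  have : Nontrivial V := by
    obtain ⟨u, hu⟩ := hUne
    obtain ⟨w, hw⟩ := hUcne
    exact ⟨u, w, fun h => (Finset.mem_compl.mp hw) (h ▸ hu)⟩
  have hBU : B ⊆ U := Finset.sdiff_subset
  have hdisjBUc : Disjoint B (Uᶜ : Finset V) :=
    (disjoint_compl_right : Disjoint U Uᶜ).mono_left hBU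
  have hdisjAUc : Disjoint A (Uᶜ : Finset V) :=
    (disjoint_compl_right : Disjoint U Uᶜ).mono_left hAU
  have hAc : Aᶜ = B ∪ Uᶜ := by
    ext v
    have hv : v ∉ U → v ∉ A := fun h1 h2 => h1 (hAU h2)
    simp only [Finset.mem_compl, Finset.mem_union, hB, Finset.mem_sdiff]
    tauto
  have hBc : Bᶜ = A ∪ Uᶜ := by
    ext v
    have hv : v ∉ U → v ∉ A := fun h1 h2 => h1 (hAU h2)
    simp only [Finset.mem_compl, Finset.mem_union, hB, Finset.mem_sdiff]
    tauto
  have hABzero : ecut H A B = 0 := by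
    unfold ecut
    rw [Finset.filter_eq_empty_iff.mpr]
    · simp
    · rintro ⟨p, q⟩ hpq
      rw [Finset.mem_product] at hpq
      exact hcross p hpq.1 q hpq.2
  have hBAzero : ecut H B A = 0 := by rw [ecut_comm]; exact hABzero
  set a := ecut H A (Uᶜ : Finset V) with ha
  set b := ecut H B (Uᶜ : Finset V) with hb
  set α := gvol H A with hα
  set β := gvol H B with hβ'
  set γ := gvol H (Uᶜ : Finset V) with hγ'
  have hcutA : ecut H A Aᶜ = a := by
    rw [hAc, ecut_union_right H A hdisjBUc, hABzero, zero_add]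
  have hcutB : ecut H B Bᶜ = b := by
    rw [hBc, ecut_union_right H B hdisjAUc, hBAzero, zero_add]
  have hcutU : ecut H U Uᶜ = a + b := by
    rw [ha, hb, ← ecut_union_left H _ hdisjAB, ← hUAB]
  have hvolU : gvol H U = α + β := by rw [hUAB, gvol_union H hdisjAB]
  have hvolAc : gvol H Aᶜ = β + γ := by rw [hAc, gvol_union H hdisjBUc]
  have hvolBc : gvol H Bᶜ = α + γ := by rw [hBc, gvol_union H hdisjAUc]
  have hvolT : gvol H univ = α + β + γ := by
    have h : (univ : Finset V) = U ∪ Uᶜ := by simp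
    rw [h, gvol_union H disjoint_compl_right, hvolU]
  have hpα : 0 < α := gvol_pos H hc hAne
  have hpβ : 0 < β := gvol_pos H hc hBne
  have hpγ : 0 < γ := gvol_pos H hc hUcne
  have hab : 0 < a + b := by rw [← hcutU]; exact ecut_pos H hc hUne hUp
  have hAuniv : A ≠ univ := fun h => hUp (Finset.eq_univ_iff_forall.mpr
    fun v => hAU (h ▸ Finset.mem_univ v))
  have hBuniv : B ≠ univ := fun h => hUp (Finset.eq_univ_iff_forall.mpr
    fun v => hBU (h ▸ Finset.mem_univ v))
  have h1 := hhat_le H hAne hAuniv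
  have h2 := hhat_le H hBne hBuniv
  rw [← hmin, hcutA, hvolAc, hvolT, hcutU, hvolU] at h1
  rw [← hmin, hcutB, hvolBc, hvolT, hcutU, hvolU] at h2
  rw [div_le_div_iff₀ (by positivity) (by positivity)] at h1 h2
  have haa : 0 ≤ a := ecut_nonneg H A _
  have hbb : 0 ≤ b := ecut_nonneg H B _
  nlinarith [mul_pos hpα hpβ, mul_pos (mul_pos hpα hpβ) hab,
    mul_pos hpγ hab, mul_pos hpα hpγ, mul_pos hpβ hpγ]


/-- If `H` is connected and the nonempty proper set `U*` attains `ĥ_H`, then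
both `H[U*]` and `H[V∖U*]` are connected. -/
theorem stmt17 {V : Type*} [Fintype V] (H : SimpleGraph V) (hc : H.Connected)
    (U : Finset V) (hUne : U.Nonempty) (hUp : U ≠ univ)
    (hmin : ecut H U Uᶜ * gvol H univ / (gvol H U * gvol H Uᶜ) = hhat H) :
    (H.induce (U : Set V)).Connected ∧ (H.induce ((Uᶜ : Finset V) : Set V)).Connected := by
  have hUcne : (Uᶜ : Finset V).Nonempty := by
    rw [Finset.nonempty_iff_ne_empty]
    intro h
    exact hUp (by simpa [Finset.compl_eq_empty_iff] using h)
  have hUcp : (Uᶜ : Finset V) ≠ univ := by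
    intro h
    obtain ⟨u, hu⟩ := hUne
    exact (Finset.mem_compl.mp (h ▸ Finset.mem_univ u)) hu
  have hmin' : ecut H Uᶜ (Uᶜ)ᶜ * gvol H univ / (gvol H Uᶜ * gvol H (Uᶜ)ᶜ) = hhat H := by
    rw [compl_compl, ecut_comm, mul_comm (gvol H Uᶜ)]
    exact hmin
  exact ⟨induce_connected_of_min H hc U hUne hUp hmin,
    by simpa using induce_connected_of_min H hc Uᶜ hUcne hUcp hmin'⟩
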